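/- For all integers n, m ≥ 3, the integral ∫_{-1}^{1} P_n(x) P_m(x) / √(1-x^2) dx equals π/4 if m = n, equals -π/8 if |n-m| = 2, and equals 0 otherwise. -/

import Mathlib

open Finset Polynomial Real

noncomputable section

/-- Binomial coefficient `C(a, b)` for integer lower index, zero when `b < 0` or `b > a`. -/
def chooseZ (a : ℕ) (b : ℤ) : ℤ := if 0 ≤ b then (a.choose b.toNat : ℤ) else 0

/-- `f n k m p = ∑_{i=0}^{n} (-1)^i C(n,i) C(np+m-ip, n+k)`. -/
def f (n : ℕ) (k : ℤ) (m p : ℕ) : ℤ :=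
  ∑ i ∈ Finset.range (n + 1),
    (-1) ^ i * (n.choose i : ℤ) * chooseZ (n * p + m - i * p) ((n : ℤ) + k)

lemma chooseZ_pascal (N : ℕ) (r : ℤ) :
    chooseZ (N + 1) r = chooseZ N r + chooseZ N (r - 1) := by
  unfold chooseZ
  rcases lt_trichotomy r 0 with h | h | h
  · rw [if_neg (by omega), if_neg (by omega), if_neg (by omega)]; ring
  · subst h; norm_num
  · obtain ⟨s, rfl⟩ : ∃ s : ℕ, r = (s : ℤ) + 1 := ⟨(r - 1).toNat, by omega⟩
    rw [if_pos (by omega), if_pos (by omega), if_pos (by omega)]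
    have h1 : ((s : ℤ) + 1).toNat = s + 1 := by omega
    have h2 : ((s : ℤ) + 1 - 1).toNat = s := by omega
    rw [h1, h2, Nat.choose_succ_succ']
    push_cast; ring

lemma chooseZ_double (N : ℕ) (r : ℤ) :
    chooseZ (N + 2) r = chooseZ N r + 2 * chooseZ N (r - 1) + chooseZ N (r - 2) := by
  have h1 := chooseZ_pascal (N + 1) r
  have h2 := chooseZ_pascal N r
  have h3 := chooseZ_pascal N (r - 1)
  have e : r - 1 - 1 = r - 2 := by ring
  rw [e] at h3
  rw [h1, h2, h3]; ring

lemma frec (a : ℕ) (b : ℤ) : f (a + 1) b 2 2 = 2 * f a b 2 2 + f a (b - 1) 2 2 := by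
  unfold f
  have hc1 : ((a + 1 : ℕ) : ℤ) + b = ((a : ℤ) + 1 + b) := by push_cast; ring
  have hc2 : ((a : ℕ) : ℤ) + b = ((a : ℤ) + 1 + b) - 1 := by ring
  have hc3 : ((a : ℕ) : ℤ) + (b - 1) = ((a : ℤ) + 1 + b) - 2 := by ring
  rw [hc1, hc2, hc3]
  set r : ℤ := (a : ℤ) + 1 + b with hr
  -- u i : extended sum with lower binomial
  set u : ℕ → ℤ := fun i => (-1) ^ i * (a.choose i : ℤ) * chooseZ ((a + 1) * 2 + 2 - i * 2) r
    with hu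
  have key : ∀ i ∈ Finset.range (a + 1),
      (-1) ^ (i+1) * (((a+1).choose (i+1) : ℕ) : ℤ) * chooseZ ((a+1) * 2 + 2 - (i+1) * 2) r
      = u (i+1) - (-1) ^ i * (a.choose i : ℤ) * chooseZ (a * 2 + 2 - i * 2) r := by
    intro i hi
    have hi' : i ≤ a := by simp only [Finset.mem_range] at hi; omega
    have hD : (a+1) * 2 + 2 - (i+1) * 2 = a * 2 + 2 - i * 2 := by omega
    simp only [hu, hD, Nat.choose_succ_succ']
    push_cast; ring
  have expand : ∀ i ∈ Finset.range (a + 1),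
      2 * ((-1) ^ i * (a.choose i : ℤ) * chooseZ (a * 2 + 2 - i * 2) (r - 1)) +
        (-1) ^ i * (a.choose i : ℤ) * chooseZ (a * 2 + 2 - i * 2) (r - 2)
      = u i - (-1) ^ i * (a.choose i : ℤ) * chooseZ (a * 2 + 2 - i * 2) r := by
    intro i hi
    have hi' : i ≤ a := by simp only [Finset.mem_range] at hi; omega
    have hD : (a+1) * 2 + 2 - i * 2 = (a * 2 + 2 - i * 2) + 2 := by omega
    simp only [hu, hD, chooseZ_double]
    ring
  rw [Finset.mul_sum, ← Finset.sum_add_distrib, Finset.sum_congr rfl expand,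
    Finset.sum_sub_distrib, Finset.sum_range_succ' _ (a+1), Finset.sum_congr rfl key,
    Finset.sum_sub_distrib]
  have h4 : ∑ i ∈ Finset.range (a + 1 + 1), u i = ∑ i ∈ Finset.range (a+1), u (i+1) + u 0 :=
    Finset.sum_range_succ' u (a+1)
  have h5 : ∑ i ∈ Finset.range (a + 1 + 1), u i = ∑ i ∈ Finset.range (a+1), u i + u (a+1) :=
    Finset.sum_range_succ u (a+1)
  have h6 : u (a+1) = 0 := by simp [hu]
  have h7 : (-1 : ℤ) ^ 0 * (((a+1).choose 0 : ℕ) : ℤ) * chooseZ ((a+1) * 2 + 2 - 0 * 2) r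
      = u 0 := by simp [hu]
  linarith

lemma f_neg (a : ℕ) : ∀ b : ℤ, b < 0 → f a b 2 2 = 0 := by
  induction a with
  | zero =>
    intro b hb
    unfold f chooseZ
    rw [Finset.sum_range_one, if_neg (by push_cast; omega)]
    ring
  | succ a ih =>
    intro b hb
    rw [frec, ih b hb, ih (b-1) (by omega)]; ring

lemma f_big (a : ℕ) : ∀ b : ℤ, (a : ℤ) + 2 < b → f a b 2 2 = 0 := by
  induction a with
  | zero =>
    intro b hb
    unfold f chooseZ
    rw [Finset.sum_range_one, if_pos (by push_cast at hb ⊢; omega)]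
    have hlt : (0 * 2 + 2 - 0 * 2 : ℕ) < ((((0:ℕ)) : ℤ) + b).toNat := by push_cast at hb ⊢; omega
    rw [Nat.choose_eq_zero_of_lt hlt]
    ring
  | succ a ih =>
    intro b hb
    push_cast at hb
    rw [frec, ih b (by omega), ih (b-1) (by omega)]; ring

/-- The coefficients `c(n,k,m,p)`. -/
def c (n : ℕ) (k : ℤ) (m p : ℕ) : ℤ :=
  if 0 ≤ k ∧ k ≤ (n : ℤ) ∧ (n : ℤ) % 2 = k % 2 ∧ 2 * (m : ℤ) ≤ (n : ℤ) + k then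
    (-1) ^ ((((n : ℤ) - k) / 2).toNat) *
      f ((((n : ℤ) + k - 2 * m) / 2).toNat) (((n : ℤ) - k) / 2) m p
  else 0

lemma cab (a b : ℕ) : c (a + b + 2) ((a : ℤ) - b + 2) 2 2 = (-1) ^ b * f a (b : ℤ) 2 2 := by
  unfold c
  by_cases hb : (b : ℤ) ≤ (a : ℤ) + 2
  · rw [if_pos (by push_cast; refine ⟨by omega, by omega, by omega, by omega⟩)]
    have h1 : ((((a + b + 2 : ℕ) : ℤ) - ((a : ℤ) - b + 2)) / 2) = (b : ℤ) := by push_cast; omega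
    have h2 : ((((a + b + 2 : ℕ) : ℤ) + ((a : ℤ) - b + 2) - 2 * (2:ℕ)) / 2).toNat = a := by
      push_cast; omega
    rw [h1, h2]
    norm_num
  · rw [if_neg (by push_cast; omega), f_big a b (by omega)]
    ring

lemma cab' (a b n : ℕ) (k : ℤ) (h1 : n = a + b + 2) (h2 : k = (a : ℤ) - b + 2) :
    c n k 2 2 = (-1) ^ b * f a (b : ℤ) 2 2 := by
  subst h1; subst h2; exact cab a b

lemma c_zero (n : ℕ) (k : ℤ) (m p : ℕ)
    (h : ¬(0 ≤ k ∧ k ≤ (n : ℤ) ∧ (n : ℤ) % 2 = k % 2 ∧ 2 * (m : ℤ) ≤ (n : ℤ) + k)) :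
    c n k m p = 0 := by
  unfold c; rw [if_neg h]

lemma crec (n : ℕ) (hn : 3 ≤ n) (k : ℤ) :
    c (n + 2) k 2 2 = 2 * c (n + 1) (k - 1) 2 2 - c n k 2 2 := by
  by_cases H : 0 ≤ k ∧ k ≤ (n : ℤ) + 2 ∧ (n : ℤ) % 2 = k % 2
  · obtain ⟨hk0, hk2, hpar⟩ := H
    by_cases htop : k = (n : ℤ) + 2
    · subst htop
      obtain ⟨a, rfl⟩ : ∃ a, n = a + 3 := ⟨n - 3, by omega⟩
      rw [cab' (a+3) 0 (a+3+2) _ (by omega) (by push_cast; ring),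
        cab' (a+2) 0 (a+3+1) _ (by omega) (by push_cast; ring),
        c_zero (a+3) _ 2 2 (by push_cast; omega)]
      have h : f (a+3) 0 2 2 = 2 * f (a+2) 0 2 2 + f (a+2) (0-1) 2 2 := frec (a+2) 0
      rw [f_neg (a+2) (0-1) (by omega)] at h
      push_cast at h ⊢
      omega
    · have hkn : k ≤ (n : ℤ) := by omega
      obtain ⟨kn, rfl⟩ : ∃ kn : ℕ, k = (kn : ℤ) := ⟨k.toNat, by omega⟩
      obtain ⟨a1, ha1⟩ : ∃ a1 : ℕ, n + kn = 2 * a1 + 4 := ⟨(n + kn) / 2 - 2, by omega⟩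
      obtain ⟨b2, hb2⟩ : ∃ b2 : ℕ, n = kn + 2 * b2 := ⟨(n - kn) / 2, by omega⟩
      rw [cab' (a1+1) (b2+1) (n+2) _ (by omega) (by push_cast; omega),
        cab' a1 (b2+1) (n+1) _ (by omega) (by push_cast; omega),
        cab' a1 b2 n _ (by omega) (by push_cast; omega)]
      have h := frec a1 ((b2 : ℤ) + 1)
      rw [show ((b2 : ℤ) + 1 - 1) = (b2 : ℤ) by ring] at h
      push_cast
      rw [h]; ring
  · rw [c_zero _ _ _ _ (by push_cast; omega), c_zero _ _ _ _ (by push_cast; omega),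
      c_zero _ _ _ _ (by push_cast; omega)]
    ring

/-- The polynomial `P_{n,m,p}(x) = ∑_{k=0}^n c(n,k,m,p) x^k`, as a real polynomial. -/
def P (n m p : ℕ) : Polynomial ℝ :=
  ∑ k ∈ Finset.range (n + 1), Polynomial.C ((c n (k : ℤ) m p : ℝ)) * Polynomial.X ^ k
lemma P_coeff (n m p k : ℕ) : (P n m p).coeff k = (c n (k : ℤ) m p : ℝ) := by
  unfold P
  rw [Polynomial.finset_sum_coeff]
  simp only [Polynomial.coeff_C_mul, Polynomial.coeff_X_pow, mul_ite, mul_one, mul_zero]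
  rw [Finset.sum_ite_eq (Finset.range (n+1)) k]
  by_cases hk : k ∈ Finset.range (n + 1)
  · rw [if_pos hk]
  · rw [if_neg hk]
    rw [c_zero n k m p (by simp only [Finset.mem_range] at hk; push_cast; omega)]
    norm_num

lemma Prec (n : ℕ) (hn : 3 ≤ n) :
    P (n + 2) 2 2 = 2 * Polynomial.X * P (n + 1) 2 2 - P n 2 2 := by
  ext k
  rw [Polynomial.coeff_sub, P_coeff, P_coeff, mul_assoc, Polynomial.coeff_ofNat_mul]
  match k with
  | 0 =>
    rw [Polynomial.mul_coeff_zero, Polynomial.coeff_X_zero]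
    have h := crec n hn 0
    rw [c_zero (n+1) (0-1) 2 2 (by rintro ⟨h1, -⟩; omega)] at h
    push_cast [h]; ring
  | (k+1) =>
    rw [Polynomial.coeff_X_mul, P_coeff]
    have h := crec n hn ((k : ℤ) + 1)
    rw [show ((k : ℤ) + 1 - 1) = (k : ℤ) by ring] at h
    push_cast [h]; ring

open Polynomial.Chebyshev in
lemma P_eq_T : ∀ n : ℕ, 3 ≤ n →
    (2 : Polynomial ℝ) * P n 2 2 = T ℝ (n : ℤ) - T ℝ ((n : ℤ) - 2) := by
  have base3 : (2 : Polynomial ℝ) * P 3 2 2 = T ℝ (3 : ℤ) - T ℝ ((3 : ℤ) - 2) := by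
    have h0 : c 3 0 2 2 = 0 := by decide
    have h1 : c 3 1 2 2 = -2 := by decide
    have h2 : c 3 2 2 2 = 0 := by decide
    have h3 : c 3 3 2 2 = 2 := by decide
    have hT3 : T ℝ (3 : ℤ) = 2 * Polynomial.X * T ℝ 2 - T ℝ 1 := by
      have := T_add_two ℝ 1
      norm_num at this
      rw [T_one]; exact this
    have e : ((3:ℤ) - 2) = 1 := by norm_num
    rw [e, hT3, T_two, T_one]
    unfold P
    rw [Finset.sum_range_succ, Finset.sum_range_succ, Finset.sum_range_succ,
      Finset.sum_range_one]
    push_cast [h0, h1, h2, h3]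
    simp only [map_neg, map_ofNat, map_zero, map_one]
    ring
  have base4 : (2 : Polynomial ℝ) * P 4 2 2 = T ℝ (4 : ℤ) - T ℝ ((4 : ℤ) - 2) := by
    have h0 : c 4 0 2 2 = 1 := by decide
    have h1 : c 4 1 2 2 = 0 := by decide
    have h2 : c 4 2 2 2 = -5 := by decide
    have h3 : c 4 3 2 2 = 0 := by decide
    have h4 : c 4 4 2 2 = 4 := by decide
    have hT3 : T ℝ (3 : ℤ) = 2 * Polynomial.X * T ℝ 2 - T ℝ 1 := by
      have := T_add_two ℝ 1
      norm_num at this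
      rw [T_one]; exact this
    have hT4 : T ℝ (4 : ℤ) = 2 * Polynomial.X * T ℝ 3 - T ℝ 2 := by
      have := T_add_two ℝ 2
      norm_num at this
      exact this
    have e : ((4:ℤ) - 2) = 2 := by norm_num
    rw [e, hT4, hT3, T_two, T_one]
    unfold P
    rw [Finset.sum_range_succ, Finset.sum_range_succ, Finset.sum_range_succ,
      Finset.sum_range_succ, Finset.sum_range_one]
    push_cast [h0, h1, h2, h3, h4]
    simp only [map_neg, map_ofNat, map_zero, map_one]
    ring
  have main : ∀ j : ℕ,
      ((2 : Polynomial ℝ) * P (j+3) 2 2 = T ℝ ((j:ℤ)+3) - T ℝ ((j:ℤ)+1)) ∧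
      ((2 : Polynomial ℝ) * P (j+4) 2 2 = T ℝ ((j:ℤ)+4) - T ℝ ((j:ℤ)+2)) := by
    intro j
    induction j with
    | zero =>
      constructor
      · simpa using base3
      · simpa using base4
    | succ j ih =>
      obtain ⟨ih1, ih2⟩ := ih
      have step : (2 : Polynomial ℝ) * P (j+5) 2 2 = T ℝ ((j:ℤ)+5) - T ℝ ((j:ℤ)+3) := by
        have hrec : P (j+5) 2 2 = 2 * Polynomial.X * P (j+4) 2 2 - P (j+3) 2 2 :=
          Prec (j+3) (by omega)
        have hT1 : T ℝ ((j:ℤ)+5) = 2 * Polynomial.X * T ℝ ((j:ℤ)+4) - T ℝ ((j:ℤ)+3) := by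
          have := T_add_two ℝ ((j:ℤ)+3)
          rw [show ((j:ℤ)+3+2) = (j:ℤ)+5 by ring, show ((j:ℤ)+3+1) = (j:ℤ)+4 by ring] at this
          exact this
        have hT2 : T ℝ ((j:ℤ)+3) = 2 * Polynomial.X * T ℝ ((j:ℤ)+2) - T ℝ ((j:ℤ)+1) := by
          have := T_add_two ℝ ((j:ℤ)+1)
          rw [show ((j:ℤ)+1+2) = (j:ℤ)+3 by ring, show ((j:ℤ)+1+1) = (j:ℤ)+2 by ring] at this
          exact this
        rw [hrec, hT1]
        linear_combination Polynomial.X * 2 * ih2 - ih1 + hT2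
      refine ⟨?_, ?_⟩
      · push_cast
        rw [show ((j:ℤ)+1+3) = (j:ℤ)+4 by ring, show ((j:ℤ)+1+1) = (j:ℤ)+2 by ring]
        exact ih2
      · push_cast
        rw [show ((j:ℤ)+1+4) = (j:ℤ)+5 by ring, show ((j:ℤ)+1+2) = (j:ℤ)+3 by ring]
        exact step
  intro n hn
  obtain ⟨j, rfl⟩ : ∃ j, n = j + 3 := ⟨n - 3, by omega⟩
  have := (main j).1
  push_cast
  rw [show ((j:ℤ)+3-2) = (j:ℤ)+1 by ring]
  exact this

open MeasureTheory in
lemma integrable_div_sqrt (q : Polynomial ℝ) :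
    IntervalIntegrable (fun x => q.eval x / Real.sqrt (1 - x ^ 2)) volume (-1 : ℝ) 1 := by
  have hbase : IntervalIntegrable (fun x : ℝ => 1 / Real.sqrt (1 - x ^ 2)) volume (-1 : ℝ) 1 := by
    apply intervalIntegral.intervalIntegrable_deriv_of_nonneg (g := Real.arcsin)
    · exact Real.continuous_arcsin.continuousOn
    · intro x hx
      rw [show min (-1:ℝ) 1 = -1 by norm_num, show max (-1:ℝ) 1 = 1 by norm_num] at hx
      exact Real.hasDerivAt_arcsin (ne_of_gt hx.1) (ne_of_lt hx.2)
    · intro x _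
      positivity
  have hcont : ContinuousOn (fun x : ℝ => q.eval x) (Set.uIcc (-1 : ℝ) 1) :=
    q.continuous.continuousOn
  have h := hbase.continuousOn_mul hcont
  have e : (fun x : ℝ => q.eval x / Real.sqrt (1 - x ^ 2))
      = fun x : ℝ => q.eval x * (1 / Real.sqrt (1 - x ^ 2)) := by
    funext x; ring
  rw [e]
  exact h

open Polynomial.Chebyshev MeasureTheory in
lemma integral_T_div_sqrt (j : ℤ) :
    ∫ x in (-1:ℝ)..1, (T ℝ j).eval x / Real.sqrt (1 - x ^ 2)
      = if j = 0 then Real.pi else 0 := by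
  rcases eq_or_ne j 0 with rfl | hj
  · rw [if_pos rfl]
    have hint := integrable_div_sqrt (1 : Polynomial ℝ)
    simp only [Polynomial.eval_one] at hint
    have key : ∫ x in (-1:ℝ)..1, (1:ℝ) / Real.sqrt (1 - x ^ 2)
        = Real.arcsin 1 - Real.arcsin (-1) := by
      apply intervalIntegral.integral_eq_sub_of_hasDeriv_right_of_le (by norm_num)
        Real.continuous_arcsin.continuousOn
        (fun x hx => (Real.hasDerivAt_arcsin (ne_of_gt hx.1) (ne_of_lt hx.2)).hasDerivWithinAt)
        hint
    have e : (fun x : ℝ => (T ℝ 0).eval x / Real.sqrt (1 - x ^ 2))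
        = fun x : ℝ => (1:ℝ) / Real.sqrt (1 - x ^ 2) := by
      funext x; rw [T_zero]; simp
    simp only [T_zero, Polynomial.eval_one]
    rw [key, Real.arcsin_one, Real.arcsin_neg_one]
    ring
  · rw [if_neg hj]
    have hj' : ((j:ℝ)) ≠ 0 := Int.cast_ne_zero.mpr hj
    set F : ℝ → ℝ := fun x => -(Real.sin ((j:ℝ) * Real.arccos x)) / j with hF
    have hderiv : ∀ x ∈ Set.Ioo (-1:ℝ) 1,
        HasDerivAt F ((T ℝ j).eval x / Real.sqrt (1 - x ^ 2)) x := by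
      intro x hx
      have h1 : HasDerivAt Real.arccos (-(1 / Real.sqrt (1 - x ^ 2))) x :=
        Real.hasDerivAt_arccos (ne_of_gt hx.1) (ne_of_lt hx.2)
      have h2 : HasDerivAt (fun y => (j:ℝ) * Real.arccos y)
          ((j:ℝ) * -(1 / Real.sqrt (1 - x ^ 2))) x := h1.const_mul _
      have h3 : HasDerivAt (fun y => Real.sin ((j:ℝ) * Real.arccos y))
          (Real.cos ((j:ℝ) * Real.arccos x) * ((j:ℝ) * -(1 / Real.sqrt (1 - x ^ 2)))) x :=
        (Real.hasDerivAt_sin _).comp x h2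
      have h4 := h3.neg.div_const (j:ℝ)
      have hcos : Real.cos ((j:ℝ) * Real.arccos x) = (T ℝ j).eval x := by
        have ht := T_real_cos (Real.arccos x) j
        rw [Real.cos_arccos (le_of_lt hx.1) (le_of_lt hx.2)] at ht
        rw [← ht]
      have hs : Real.sqrt (1 - x ^ 2) ≠ 0 :=
        ne_of_gt (Real.sqrt_pos.mpr (by nlinarith [hx.1, hx.2]))
      have h5 : HasDerivAt F
          (-(Real.cos ((j:ℝ) * Real.arccos x) * ((j:ℝ) * -(1 / Real.sqrt (1 - x ^ 2)))) / (j:ℝ)) x :=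
        h4
      convert h5 using 1
      rw [← hcos]
      field_simp
    have hcontF : ContinuousOn F (Set.Icc (-1:ℝ) 1) := by
      apply Continuous.continuousOn
      exact ((Real.continuous_sin.comp (continuous_const.mul Real.continuous_arccos)).neg).div_const _
    have key := intervalIntegral.integral_eq_sub_of_hasDeriv_right_of_le
      (by norm_num : (-1:ℝ) ≤ 1) hcontF
      (fun x hx => (hderiv x hx).hasDerivWithinAt) (integrable_div_sqrt (T ℝ j))
    rw [key, hF]
    simp [Real.arccos_one, Real.arccos_neg_one, Real.sin_int_mul_pi]

open Polynomial.Chebyshev MeasureTheory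

/-- For n, m ≥ 3,
`∫_{-1}^{1} P_n(x) P_m(x) / √(1-x²) dx` equals π/4 if m = n, -π/8 if |n-m| = 2, 0 otherwise. -/
theorem statement6 (n m : ℕ) (hn : 3 ≤ n) (hm : 3 ≤ m) :
    ∫ x in (-1 : ℝ)..1, (P n 2 2).eval x * (P m 2 2).eval x / Real.sqrt (1 - x ^ 2) =
      if n = m then Real.pi / 4
      else if ((n : ℤ) - m).natAbs = 2 then - (Real.pi / 8)
      else 0 := by
  have hpn := P_eq_T n hn
  have hpm := P_eq_T m hm
  have hpoly : (8 : Polynomial ℝ) * (P n 2 2 * P m 2 2)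
      = T ℝ ((n:ℤ)+m) + 2 * T ℝ ((n:ℤ)-m) + T ℝ ((n:ℤ)+m-4) - 2 * T ℝ ((n:ℤ)+m-2)
        - T ℝ ((n:ℤ)-m+2) - T ℝ ((n:ℤ)-m-2) := by
    have e1 := T_mul_T ℝ (n:ℤ) (m:ℤ)
    have e2 := T_mul_T ℝ (n:ℤ) ((m:ℤ)-2)
    have e3 := T_mul_T ℝ ((n:ℤ)-2) (m:ℤ)
    have e4 := T_mul_T ℝ ((n:ℤ)-2) ((m:ℤ)-2)
    rw [show (n:ℤ)+((m:ℤ)-2) = (n:ℤ)+m-2 by ring,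
      show (n:ℤ)-((m:ℤ)-2) = (n:ℤ)-m+2 by ring] at e2
    rw [show (n:ℤ)-2+(m:ℤ) = (n:ℤ)+m-2 by ring,
      show (n:ℤ)-2-(m:ℤ) = (n:ℤ)-m-2 by ring] at e3
    rw [show (n:ℤ)-2+((m:ℤ)-2) = (n:ℤ)+m-4 by ring,
      show (n:ℤ)-2-((m:ℤ)-2) = (n:ℤ)-m by ring] at e4
    linear_combination (4 * P m 2 2) * hpn + 2 * (T ℝ (n:ℤ) - T ℝ ((n:ℤ)-2)) * hpm
      + e1 - e2 - e3 + e4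
  set g : ℤ → ℝ → ℝ := fun j x => Polynomial.eval x (T ℝ j) / Real.sqrt (1 - x ^ 2) with hg
  have hgint : ∀ j, IntervalIntegrable (g j) volume (-1:ℝ) 1 := fun j => integrable_div_sqrt _
  have hv : ∀ j : ℤ, (∫ x in (-1:ℝ)..1, g j x) = if j = 0 then Real.pi else 0 := by
    intro j
    simpa only [hg] using integral_T_div_sqrt j
  have key : (∫ x in (-1 : ℝ)..1, (P n 2 2).eval x * (P m 2 2).eval x / Real.sqrt (1 - x ^ 2))
      = (1/8) * ∫ x in (-1:ℝ)..1, (g ((n:ℤ)+m) x + 2 * g ((n:ℤ)-m) x + g ((n:ℤ)+m-4) x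
          - 2 * g ((n:ℤ)+m-2) x - g ((n:ℤ)-m+2) x - g ((n:ℤ)-m-2) x) := by
    rw [← intervalIntegral.integral_const_mul]
    apply intervalIntegral.integral_congr
    intro x _
    have hpx := congrArg (Polynomial.eval x) hpoly
    simp only [Polynomial.eval_add, Polynomial.eval_sub, Polynomial.eval_mul,
      Polynomial.eval_ofNat] at hpx
    simp only [hg]
    linear_combination (1 / (8 * Real.sqrt (1 - x ^ 2))) * hpx
  rw [key]
  rw [intervalIntegral.integral_sub (((((hgint _).add ((hgint _).const_mul 2)).add
      (hgint _)).sub ((hgint _).const_mul 2)).sub (hgint _)) (hgint _),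
    intervalIntegral.integral_sub ((((hgint _).add ((hgint _).const_mul 2)).add
      (hgint _)).sub ((hgint _).const_mul 2)) (hgint _),
    intervalIntegral.integral_sub (((hgint _).add ((hgint _).const_mul 2)).add
      (hgint _)) ((hgint _).const_mul 2),
    intervalIntegral.integral_add ((hgint _).add ((hgint _).const_mul 2)) (hgint _),
    intervalIntegral.integral_add (hgint _) ((hgint _).const_mul 2),
    intervalIntegral.integral_const_mul, intervalIntegral.integral_const_mul]
  rw [hv, hv, hv, hv, hv, hv]
  have h1 : ((n:ℤ)+m) ≠ 0 := by omega
  have h2 : ((n:ℤ)+m-4) ≠ 0 := by omega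
  have h3 : ((n:ℤ)+m-2) ≠ 0 := by omega
  rw [if_neg h1, if_neg h2, if_neg h3]
  by_cases hnm : n = m
  · subst hnm
    rw [if_pos rfl, if_pos (by omega : ((n:ℤ)-n) = 0),
      if_neg (by omega : ((n:ℤ)-n+2) ≠ 0), if_neg (by omega : ((n:ℤ)-n-2) ≠ 0)]
    ring
  · rw [if_neg hnm, if_neg (by omega : ((n:ℤ)-m) ≠ 0)]
    by_cases habs : ((n : ℤ) - m).natAbs = 2
    · rw [if_pos habs]
      rcases (by omega : (n:ℤ)-m = 2 ∨ (n:ℤ)-m = -2) with h | h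
      · rw [h, if_neg (by omega : (2:ℤ)+2 ≠ 0), if_pos (by omega : (2:ℤ)-2 = 0)]
        ring
      · rw [h, if_pos (by omega : (-2:ℤ)+2 = 0), if_neg (by omega : (-2:ℤ)-2 ≠ 0)]
        ring
    · rw [if_neg habs, if_neg (by omega : ((n:ℤ)-m+2) ≠ 0),
        if_neg (by omega : ((n:ℤ)-m-2) ≠ 0)]
      ring

end
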